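/- Let H be a complex Hilbert space, 𝔇 ⊆ H a dense subspace, and B a closable operator on H with domain 𝔇. Let x be a bounded operator on H such that x𝔇 ⊆ 𝔇, x*𝔇 ⊆ 𝔇, and x B ξ = B x ξ and x* B ξ = B x* ξ for all ξ ∈ 𝔇. Then x B̄ ⊆ B̄ x, x* B̄ ⊆ B̄ x*, x B̄* ⊆ B̄* x, and x* B̄* ⊆ B̄* x* (containments of unbounded operators, B̄ denoting the closure of B); consequently x belongs to the commutant of the von Neumann algebra W*(B̄) generated by B̄, i.e. x commutes strongly with B. -/
import Mathlib


open scoped InnerProductSpace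

noncomputable section

variable {H : Type*} [NormedAddCommGroup H] [InnerProductSpace ℂ H] [CompleteSpace H]

/-- `x S ⊆ S x` for a bounded operator `x` and an unbounded operator `S`: for every
`ξ ∈ dom S` one has `x ξ ∈ dom S` and `S (x ξ) = x (S ξ)`. -/
def PMapCommute (x : H →L[ℂ] H) (S : H →ₗ.[ℂ] H) : Prop :=
  ∀ ξ : S.domain, ∃ h : x (ξ : H) ∈ S.domain, S ⟨x (ξ : H), h⟩ = x (S ξ)

/-- The set of bounded operators commuting with `S` and `S*` (in the containment sense). -/
def pmapCommutant (S : H →ₗ.[ℂ] H) : Set (H →L[ℂ] H) :=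
  {x | PMapCommute x S ∧ PMapCommute x S.adjoint}

/-- The von Neumann algebra `W*(S)` generated by a closed densely defined operator `S`,
defined as the commutant of the set of bounded operators commuting with `S` and `S*`. -/
def vnGen (S : H →ₗ.[ℂ] H) : Set (H →L[ℂ] H) :=
  Set.centralizer (pmapCommutant S)

/-- A bounded operator leaving the domain invariant and commuting with a closable operator
on its domain commutes with the closure. -/
theorem pmapCommute_closure
    (B : H →ₗ.[ℂ] H) (hB : B.IsClosable) (x : H →L[ℂ] H)
    (hx : ∀ ξ : B.domain, x (ξ : H) ∈ B.domain)
    (hcomm : ∀ ξ : B.domain, x (B ξ) = B ⟨x (ξ : H), hx ξ⟩) :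
    PMapCommute x B.closure := by
  intro ξ
  have hgraph : ((ξ : H), B.closure ξ) ∈ B.closure.graph := B.closure.mem_graph ξ
  rw [← hB.graph_closure_eq_closure_graph] at hgraph
  have hgraph' : ((ξ : H), B.closure ξ) ∈ closure (B.graph : Set (H × H)) := by
    rwa [← Submodule.topologicalClosure_coe]
  have hmapsto : Set.MapsTo (fun p : H × H => (x p.1, x p.2))
      (B.graph : Set (H × H)) (B.graph : Set (H × H)) := by
    intro p hp
    rw [SetLike.mem_coe, LinearPMap.mem_graph_iff] at hp
    obtain ⟨y, hy1, hy2⟩ := hp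
    rw [SetLike.mem_coe, LinearPMap.mem_graph_iff]
    refine ⟨⟨x (y : H), hx y⟩, by simp [← hy1], ?_⟩
    simp only [← hy2]
    exact (hcomm y).symm
  have hcont : Continuous (fun p : H × H => (x p.1, x p.2)) :=
    (x.continuous.comp continuous_fst).prodMk (x.continuous.comp continuous_snd)
  have hmem : (x (ξ : H), x (B.closure ξ)) ∈ closure (B.graph : Set (H × H)) :=
    map_mem_closure (f := fun p : H × H => (x p.1, x p.2)) hcont hgraph' hmapsto
  rw [← Submodule.topologicalClosure_coe, SetLike.mem_coe,
    hB.graph_closure_eq_closure_graph] at hmem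
  rw [LinearPMap.mem_graph_iff] at hmem
  obtain ⟨y, hy1, hy2⟩ := hmem
  have hy1' : (y : H) = x (ξ : H) := hy1
  have hy2' : B.closure y = x (B.closure ξ) := hy2
  refine ⟨hy1' ▸ y.2, ?_⟩
  rw [← hy2']
  congr 1
  exact Subtype.ext hy1.symm

/-- If `x S ⊆ S x` with `S` densely defined, then `x† S† ⊆ S† x†`. -/
theorem pmapCommute_adjoint
    (S : H →ₗ.[ℂ] H) (hS : Dense (S.domain : Set H)) (x : H →L[ℂ] H)
    (h : PMapCommute x S) :
    PMapCommute (ContinuousLinearMap.adjoint x) S.adjoint := by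
  intro η
  have key : ∀ ξ : S.domain,
      ⟪(ContinuousLinearMap.adjoint x) (S.adjoint η), (ξ : H)⟫_ℂ
        = ⟪(ContinuousLinearMap.adjoint x) (η : H), S ξ⟫_ℂ := by
    intro ξ
    obtain ⟨hmem, heq⟩ := h ξ
    rw [ContinuousLinearMap.adjoint_inner_left, ContinuousLinearMap.adjoint_inner_left,
      ← heq]
    exact S.adjoint_isFormalAdjoint hS η ⟨x (ξ : H), hmem⟩
  have hdom : (ContinuousLinearMap.adjoint x) (η : H) ∈ S.adjoint.domain := by
    apply LinearPMap.mem_adjoint_domain_of_exists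
    exact ⟨(ContinuousLinearMap.adjoint x) (S.adjoint η), key⟩
  exact ⟨hdom, LinearPMap.adjoint_apply_eq hS ⟨_, hdom⟩ key⟩

/-- Let `B` be a closable operator on `H` with dense domain `𝔇`, and `x` a
bounded operator with `x𝔇 ⊆ 𝔇`, `x*𝔇 ⊆ 𝔇`, `xBξ = Bxξ` and `x*Bξ = Bx*ξ` on `𝔇`.  Then
`x B̄ ⊆ B̄ x`, `x* B̄ ⊆ B̄ x*`, `x B̄* ⊆ B̄* x`, `x* B̄* ⊆ B̄* x*`, and consequently `x` belongs to
the commutant of the von Neumann algebra `W*(B̄)` generated by `B̄`, i.e. `x` commutes strongly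
with `B`. -/
theorem statement6
    (B : H →ₗ.[ℂ] H)
    (hdense : Dense (B.domain : Set H))
    (hB : B.IsClosable)
    (x : H →L[ℂ] H)
    (hx : ∀ ξ : B.domain, x (ξ : H) ∈ B.domain)
    (hxstar : ∀ ξ : B.domain, (ContinuousLinearMap.adjoint x) (ξ : H) ∈ B.domain)
    (hcomm : ∀ ξ : B.domain, x (B ξ) = B ⟨x (ξ : H), hx ξ⟩)
    (hcommstar : ∀ ξ : B.domain,
      (ContinuousLinearMap.adjoint x) (B ξ) = B ⟨(ContinuousLinearMap.adjoint x) (ξ : H), hxstar ξ⟩) :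
    PMapCommute x B.closure ∧
    PMapCommute (ContinuousLinearMap.adjoint x) B.closure ∧
    PMapCommute x B.closure.adjoint ∧
    PMapCommute (ContinuousLinearMap.adjoint x) B.closure.adjoint ∧
    x ∈ Set.centralizer (vnGen B.closure) := by
  have hdense' : Dense (B.closure.domain : Set H) := by
    have hle : B ≤ B.closure := B.le_closure
    exact hdense.mono (by exact_mod_cast hle.1)
  have h1 : PMapCommute x B.closure := pmapCommute_closure B hB x hx hcomm
  have h2 : PMapCommute (ContinuousLinearMap.adjoint x) B.closure :=
    pmapCommute_closure B hB _ hxstar hcommstar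
  have h3 : PMapCommute x B.closure.adjoint := by
    have := pmapCommute_adjoint B.closure hdense' (ContinuousLinearMap.adjoint x) h2
    rwa [ContinuousLinearMap.adjoint_adjoint] at this
  have h4 : PMapCommute (ContinuousLinearMap.adjoint x) B.closure.adjoint :=
    pmapCommute_adjoint B.closure hdense' x h1
  refine ⟨h1, h2, h3, h4, ?_⟩
  have hxmem : x ∈ pmapCommutant B.closure := ⟨h1, h3⟩
  exact Set.subset_centralizer_centralizer hxmem

end
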